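/- Let n ≥ 1, let · be a quasigroup operation of order n on Fin n, let σ and τ be disjoint complete mappings of (Fin n, ·), and let x₀ ∈ Fin n. Let ∗ be the Belyavskaya prolongation of (Fin n, ·) along σ with excluded element x₀, a quasigroup operation on Fin (n+1) with last element e. Define τ' : Fin (n+1) → Fin (n+1) by τ'x = τx for x < n and τ'e = e. Then τ' is a quasicomplete mapping of (Fin (n+1), ∗): τ' is a permutation of Fin (n+1), the image of the map x ↦ x∗τ'x is exactly Fin (n+1) \ {e}, and the value x₀·σx₀ is attained by this map at the two distinct arguments e and the unique y < n with τy-value giving x₀·σx₀ (i.e., x₀·σx₀ is attained twice). -/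
import Mathlib


/-- A binary operation on `Fin m` is a quasigroup operation if all left and
right translations are bijections. -/
def IsQuasigroup {m : ℕ} (f : Fin m → Fin m → Fin m) : Prop :=
  ∀ a : Fin m, Function.Bijective (fun x => f a x) ∧ Function.Bijective (fun x => f x a)

/-- Let `f` be a quasigroup operation of order `n ≥ 1` on `Fin n` with disjoint
complete mappings `σ` and `τ`, let `x₀ ∈ Fin n`, and let `star` be the
Belyavskaya prolongation of `f` along `σ` with excluded element `x₀`
(characterized cell-by-cell by `h1`–`h8`, with `Fin n` identified with the first
`n` elements of `Fin (n+1)` and `e = Fin.last n`).  Extend `τ` to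
`τ' : Fin (n+1) → Fin (n+1)` by `τ' x = τ x` for `x < n` and `τ' e = e`.
Then `τ'` is a quasicomplete mapping of `(Fin (n+1), star)`: `τ'` is a
permutation, the image of `x ↦ star x (τ' x)` is exactly `Fin (n+1) \ {e}`, and
the value `f x₀ (σ x₀)` is attained by this map at `e` and at a unique argument
`y < n` (so it is attained at two distinct arguments). -/
theorem belyavskaya_prolongation_quasicomplete_mapping
    (n : ℕ) (hn : 1 ≤ n)
    (f : Fin n → Fin n → Fin n) (hf : IsQuasigroup f)
    (σ τ : Equiv.Perm (Fin n))
    (hσ : Function.Bijective (fun x => f x (σ x)))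
    (hτ : Function.Bijective (fun x => f x (τ x)))
    (hdisj : ∀ x : Fin n, σ x ≠ τ x)
    (x₀ : Fin n)
    (star : Fin (n + 1) → Fin (n + 1) → Fin (n + 1))
    (h1 : ∀ x y : Fin n, y ≠ σ x →
      star x.castSucc y.castSucc = (f x y).castSucc)
    (h2 : ∀ x : Fin n, x ≠ x₀ → star x.castSucc (σ x).castSucc = Fin.last n)
    (h3 : ∀ x : Fin n, x ≠ x₀ →
      star x.castSucc (Fin.last n) = (f x (σ x)).castSucc)
    (h4 : ∀ x : Fin n, x ≠ x₀ →
      star (Fin.last n) (σ x).castSucc = (f x (σ x)).castSucc)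
    (h5 : star x₀.castSucc (σ x₀).castSucc = (f x₀ (σ x₀)).castSucc)
    (h6 : star x₀.castSucc (Fin.last n) = Fin.last n)
    (h7 : star (Fin.last n) (σ x₀).castSucc = Fin.last n)
    (h8 : star (Fin.last n) (Fin.last n) = (f x₀ (σ x₀)).castSucc)
    (τ' : Fin (n + 1) → Fin (n + 1))
    (hτ'1 : ∀ x : Fin n, τ' x.castSucc = (τ x).castSucc)
    (hτ'2 : τ' (Fin.last n) = Fin.last n) :
    Function.Bijective τ' ∧
    Set.range (fun x => star x (τ' x)) = {Fin.last n}ᶜ ∧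
    star (Fin.last n) (τ' (Fin.last n)) = (f x₀ (σ x₀)).castSucc ∧
    (∃! y : Fin n, star y.castSucc (τ' y.castSucc) = (f x₀ (σ x₀)).castSucc) := by
  have hcs : ∀ x : Fin n, star x.castSucc (τ' x.castSucc) = (f x (τ x)).castSucc := by
    intro x
    rw [hτ'1]
    exact h1 x (τ x) (fun h => hdisj x h.symm)
  have hinj : Function.Injective τ' := by
    intro a b hab
    induction a using Fin.lastCases with
    | last =>
      induction b using Fin.lastCases with
      | last => rfl
      | cast b =>
        rw [hτ'2, hτ'1] at hab
        exact absurd hab.symm (Fin.castSucc_lt_last (τ b)).ne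
    | cast a =>
      induction b using Fin.lastCases with
      | last =>
        rw [hτ'2, hτ'1] at hab
        exact absurd hab (Fin.castSucc_lt_last (τ a)).ne
      | cast b =>
        rw [hτ'1, hτ'1] at hab
        rw [τ.injective (Fin.castSucc_injective _ hab)]
  have hsurj : Function.Surjective τ' := by
    intro y
    induction y using Fin.lastCases with
    | last => exact ⟨Fin.last n, hτ'2⟩
    | cast y => exact ⟨(τ.symm y).castSucc, by rw [hτ'1]; simp⟩
  refine ⟨⟨hinj, hsurj⟩, ?_, ?_, ?_⟩
  · ext z
    simp only [Set.mem_range, Set.mem_compl_iff, Set.mem_singleton_iff]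
    constructor
    · rintro ⟨x, rfl⟩
      induction x using Fin.lastCases with
      | last => rw [hτ'2, h8]; exact (Fin.castSucc_lt_last _).ne
      | cast x => rw [hcs]; exact (Fin.castSucc_lt_last _).ne
    · intro hz
      induction z using Fin.lastCases with
      | last => exact absurd rfl hz
      | cast z =>
        obtain ⟨x, hx⟩ := hτ.2 z
        exact ⟨x.castSucc, by rw [hcs]; exact congrArg _ hx⟩
  · rw [hτ'2, h8]
  · obtain ⟨y, hy⟩ := hτ.2 (f x₀ (σ x₀))
    refine ⟨y, by show star y.castSucc (τ' y.castSucc) = _; rw [hcs]; exact congrArg _ hy, ?_⟩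
    intro z hz
    rw [hcs] at hz
    exact hτ.1 ((Fin.castSucc_injective _ hz).trans hy.symm)
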